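/- Let q be a nonzero complex number that is not a root of unity, and let m and l be positive integers with m ≥ l. Then ∑_{i=0}^{min(l, m-l)} (-1)^i q^{-i} [m-i]_q! / ([i]_q! [l-i]_q! [m-l-i]_q!) = q^{l(m-l)}. Equivalently, ∑_{i=0}^{min(l, m-l)} (-1)^i q^{-i} [l choose i]_q [m-i choose l]_q = q^{l(m-l)}. -/

import Mathlib

open scoped BigOperators

/-- The `q`-integer `[r]_q = (q^r - q^{-r})/(q - q⁻¹)`. -/
noncomputable def qint (q : ℂ) (r : ℤ) : ℂ := (q ^ r - q ^ (-r)) / (q - q⁻¹)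

/-- The `q`-factorial `[r]_q! = ∏_{s=1}^r [s]_q`. -/
noncomputable def qfact (q : ℂ) (r : ℕ) : ℂ := ∏ s ∈ Finset.range r, qint q ((s : ℤ) + 1)

/-- The `q`-binomial coefficient `[r choose s]_q`. -/
noncomputable def qbinom (q : ℂ) (r s : ℕ) : ℂ := qfact q r / (qfact q s * qfact q (r - s))

/-- `q` is not a root of unity. -/
def NotRootOfUnity (q : ℂ) : Prop := ∀ k : ℕ, 0 < k → q ^ k ≠ 1

namespace QIdent


variable {q : ℂ}

/-- Symmetric q-binomial coefficients defined by the q-Pascal recursion. -/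
noncomputable def qb (q : ℂ) : ℕ → ℕ → ℂ
  | 0, 0 => 1
  | 0, _+1 => 0
  | _+1, 0 => 1
  | l+1, i+1 => q ^ ((i : ℤ) + 1) * qb q l (i + 1) + q ^ ((i : ℤ) - (l : ℤ)) * qb q l i

lemma qb_zero (l : ℕ) : qb q l 0 = 1 := by cases l <;> rfl

lemma qb_succ (l i : ℕ) : qb q (l+1) (i+1)
    = q ^ ((i : ℤ) + 1) * qb q l (i + 1) + q ^ ((i : ℤ) - (l : ℤ)) * qb q l i := rfl

lemma qb_gt : ∀ l i : ℕ, l < i → qb q l i = 0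
  | 0, _+1, _ => rfl
  | l+1, i+1, h => by
      rw [qb_succ, qb_gt l (i+1) (by omega), qb_gt l i (by omega)]
      ring

lemma qb_self : ∀ l : ℕ, qb q l l = 1
  | 0 => rfl
  | l+1 => by
      rw [qb_succ, qb_gt l (l+1) (by omega), qb_self l]
      simp

lemma zpow_merge (hq : q ≠ 0) {a b c : ℤ} (h : a + b = c) : q ^ a * q ^ b = q ^ c := by
  rw [← h, zpow_add₀ hq]

lemma zpow_ne_one (hq : q ≠ 0) (hq' : ∀ k : ℕ, 0 < k → q ^ k ≠ 1) {n : ℤ} (hn : n ≠ 0) :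
    q ^ n ≠ 1 := by
  rcases lt_or_gt_of_ne hn with h | h
  · intro hcon
    have h2 : q ^ (-n) ≠ 1 := by
      have := hq' (-n).toNat (by omega)
      rwa [← zpow_natCast, Int.toNat_of_nonneg (by omega)] at this
    rw [zpow_neg, hcon] at h2
    simp at h2
  · have := hq' n.toNat (by omega)
    rwa [← zpow_natCast, Int.toNat_of_nonneg (by omega)] at this

lemma sub_inv_ne (hq : q ≠ 0) (hq' : ∀ k : ℕ, 0 < k → q ^ k ≠ 1) : q - q⁻¹ ≠ 0 := by
  intro h
  have h2 : q ^ (2:ℤ) = 1 := by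
    have h3 : q = q⁻¹ := by linear_combination h
    field_simp at h3
    rw [show (2:ℤ) = 2 by rfl, zpow_two]
    linear_combination h3
  exact zpow_ne_one hq hq' (by norm_num) h2

lemma qint_ne_zero (hq : q ≠ 0) (hq' : ∀ k : ℕ, 0 < k → q ^ k ≠ 1) {r : ℤ} (hr : r ≠ 0) :
    qint q r ≠ 0 := by
  apply div_ne_zero _ (sub_inv_ne hq hq')
  intro h
  have h1 : q ^ (2*r) = 1 := by
    have hr2 : q ^ r = q ^ (-r) := by linear_combination h
    have hnz := zpow_ne_zero (-r) hq
    calc q ^ (2*r) = q ^ r * q ^ r := by rw [two_mul, zpow_add₀ hq]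
    _ = q ^ r * q ^ (-r) * (q^r * (q ^ (-r))⁻¹) := by
        rw [hr2]; field_simp
    _ = q ^ r * q ^ (-r) * (q ^ (-r) * (q ^ (-r))⁻¹) := by rw [hr2]
    _ = q ^ r * q ^ (-r) := by field_simp
    _ = 1 := by rw [← zpow_add₀ hq]; simp
  exact zpow_ne_one hq hq' (by omega) h1

lemma qfact_ne_zero (hq : q ≠ 0) (hq' : ∀ k : ℕ, 0 < k → q ^ k ≠ 1) (l : ℕ) :
    qfact q l ≠ 0 := by
  rw [qfact, Finset.prod_ne_zero_iff]
  exact fun s _ => qint_ne_zero hq hq' (by omega)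

lemma qfact_succ (n : ℕ) : qfact q (n+1) = qfact q n * qint q ((n:ℤ)+1) := by
  rw [qfact, qfact, Finset.prod_range_succ]

lemma qint_rec (hq : q ≠ 0) (l i : ℕ) :
    q ^ ((i:ℤ)+1) * qint q ((l:ℤ) - i) + q ^ ((i:ℤ) - l) * qint q ((i:ℤ)+1)
      = qint q ((l:ℤ)+1) := by
  rw [qint, qint, qint]
  rw [← mul_div_assoc, ← mul_div_assoc, ← add_div]
  congr 1
  have h1 : q ^ ((i:ℤ)+1) * q ^ ((l:ℤ)-i) = q ^ ((l:ℤ)+1) := by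
    rw [← zpow_add₀ hq]; ring_nf
  have h2 : q ^ ((i:ℤ)+1) * q ^ (-((l:ℤ)-i)) = q ^ ((i:ℤ)-l) * q ^ ((i:ℤ)+1) := by
    rw [← zpow_add₀ hq, ← zpow_add₀ hq]; ring_nf
  have h3 : q ^ ((i:ℤ)-l) * q ^ (-((i:ℤ)+1)) = q ^ (-((l:ℤ)+1)) := by
    rw [← zpow_add₀ hq]; ring_nf
  linear_combination h1 - h2 - h3

lemma qb_mul_qfact (hq : q ≠ 0) : ∀ l i : ℕ, i ≤ l →
    qb q l i * (qfact q i * qfact q (l - i)) = qfact q l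
  | 0, 0, _ => by simp [qb, qfact]
  | l+1, 0, _ => by simp [qb_zero, qfact]
  | l+1, i+1, h => by
    rcases Nat.lt_or_ge i l with hil | hil
    · have hi1 : i + 1 ≤ l := hil
      have e1 : l + 1 - (i+1) = l - i := by omega
      have e2 : l - i = (l - (i+1)) + 1 := by omega
      rw [qb_succ, e1, add_mul, e2, qfact_succ (l - (i+1)), qfact_succ i]
      have ecast : ((l - (i+1) : ℕ) : ℤ) + 1 = (l:ℤ) - i := by
        have h5 : ((l - (i+1) : ℕ) : ℤ) = (l:ℤ) - (i+1) := by
          rw [Nat.cast_sub hi1]; push_cast; ring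
        rw [h5]; ring
      rw [ecast]
      have IH1 := qb_mul_qfact hq l (i+1) hi1
      have IH2 := qb_mul_qfact hq l i (by omega)
      calc q ^ ((i:ℤ)+1) * qb q l (i+1) * (qfact q i * qint q ((i:ℤ)+1) * (qfact q (l-(i+1)) * qint q ((l:ℤ)-i)))
            + q ^ ((i:ℤ)-l) * qb q l i * (qfact q i * qint q ((i:ℤ)+1) * (qfact q (l-(i+1)) * qint q ((l:ℤ)-i)))
          = q ^ ((i:ℤ)+1) * qint q ((l:ℤ)-i) * (qb q l (i+1) * (qfact q (i+1) * qfact q (l-(i+1))))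
            + q ^ ((i:ℤ)-l) * qint q ((i:ℤ)+1) * (qb q l i * (qfact q i * qfact q (l-(i+1)) * qint q ((l:ℤ)-i))) := by
            rw [qfact_succ i]; ring
        _ = q ^ ((i:ℤ)+1) * qint q ((l:ℤ)-i) * qfact q l
            + q ^ ((i:ℤ)-l) * qint q ((i:ℤ)+1) * qfact q l := by
            rw [IH1]
            congr 2
            calc qb q l i * (qfact q i * qfact q (l-(i+1)) * qint q ((l:ℤ)-i))
                = qb q l i * (qfact q i * (qfact q (l-(i+1)) * qint q ((l:ℤ)-i))) := by ring
              _ = qfact q l := by rw [← ecast, ← qfact_succ, ← e2]; exact IH2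
        _ = qfact q l * (q ^ ((i:ℤ)+1) * qint q ((l:ℤ) - i) + q ^ ((i:ℤ) - l) * qint q ((i:ℤ)+1)) := by ring
        _ = qfact q (l+1) := by rw [qint_rec hq, qfact_succ]
    · have h6 : i = l := by omega
      subst h6
      rw [qb_succ, qb_gt i (i+1) (by omega), qb_self]
      simp [qfact]

lemma qb_gauss (hq : q ≠ 0) : ∀ (l : ℕ) (x : ℂ),
    ∑ i ∈ Finset.range (l+1), qb q l i * q ^ ((i:ℤ) * ((l:ℤ)-1)) * x ^ i
      = ∏ j ∈ Finset.range l, (1 + q ^ (2*(j:ℤ)) * x)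
  | 0, x => by simp [qb]
  | l+1, x => by
    set g : ℕ → ℂ := fun i => qb q l i * q ^ ((i:ℤ) * ((l:ℤ)+1)) * x ^ i with hgdef
    have IH := qb_gauss hq l (q ^ (2:ℤ) * x)
    have hGP : ∏ j ∈ Finset.range l, (1 + q ^ (2*(j:ℤ)) * (q ^ (2:ℤ) * x))
        = ∏ j ∈ Finset.range l, (1 + q ^ (2*((j:ℤ)+1)) * x) := by
      refine Finset.prod_congr rfl fun j _ => ?_
      rw [← mul_assoc, zpow_merge hq (show 2*(j:ℤ) + 2 = 2*((j:ℤ)+1) from by ring)]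
    rw [hGP] at IH
    have hG : ∑ i ∈ Finset.range (l+1), g i
        = ∏ j ∈ Finset.range l, (1 + q ^ (2*((j:ℤ)+1)) * x) := by
      rw [← IH]
      refine Finset.sum_congr rfl fun i _ => ?_
      rw [hgdef]
      simp only
      rw [mul_pow, ← zpow_natCast (q ^ (2:ℤ)) i, ← zpow_mul,
        show qb q l i * q ^ ((i:ℤ)*((l:ℤ)-1)) * (q ^ ((2:ℤ)*(i:ℤ)) * x ^ i)
          = qb q l i * (q ^ ((i:ℤ)*((l:ℤ)-1)) * q ^ ((2:ℤ)*(i:ℤ))) * x ^ i from by ring,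
        zpow_merge hq (show (i:ℤ)*((l:ℤ)-1) + 2*(i:ℤ) = (i:ℤ)*((l:ℤ)+1) from by ring)]
    have hgl : g (l+1) = 0 := by rw [hgdef]; simp only; rw [qb_gt l (l+1) (by omega)]; ring
    have hg0 : g 0 = 1 := by rw [hgdef]; simp [qb_zero]
    have hshift : ∑ i ∈ Finset.range (l+1), g (i+1)
        = ∑ i ∈ Finset.range (l+1), g i - 1 := by
      have h1 := Finset.sum_range_succ' g (l+1)
      have h2 := Finset.sum_range_succ g (l+1)
      rw [h2, hgl, hg0] at h1
      linear_combination -h1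
    have hmain : ∑ i ∈ Finset.range (l+1+1), qb q (l+1) i * q ^ ((i:ℤ) * (((l:ℤ)+1)-1)) * x ^ i
        = (1+x) * ∏ j ∈ Finset.range l, (1 + q ^ (2*((j:ℤ)+1)) * x) := by
      rw [Finset.sum_range_succ']
      have hterm : ∀ i ∈ Finset.range (l+1),
          qb q (l+1) (i+1) * q ^ (((i+1:ℕ):ℤ) * (((l:ℤ)+1)-1)) * x ^ (i+1)
            = g (i+1) + x * g i := by
        intro i _
        rw [qb_succ, hgdef]
        simp only
        push_cast
        rw [show ((i:ℤ)+1) * (((l:ℤ)+1)-1) = ((i:ℤ)+1)*(l:ℤ) from by ring]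
        rw [show (q ^ ((i:ℤ)+1) * qb q l (i+1) + q ^ ((i:ℤ)-(l:ℤ)) * qb q l i)
              * q ^ (((i:ℤ)+1)*(l:ℤ)) * x ^ (i+1)
            = qb q l (i+1) * (q ^ ((i:ℤ)+1) * q ^ (((i:ℤ)+1)*(l:ℤ))) * x ^ (i+1)
              + qb q l i * (q ^ ((i:ℤ)-(l:ℤ)) * q ^ (((i:ℤ)+1)*(l:ℤ))) * x ^ (i+1) from by ring,
          zpow_merge hq (show ((i:ℤ)+1) + ((i:ℤ)+1)*(l:ℤ) = ((i:ℤ)+1)*((l:ℤ)+1) from by ring),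
          zpow_merge hq (show ((i:ℤ)-(l:ℤ)) + ((i:ℤ)+1)*(l:ℤ) = (i:ℤ)*((l:ℤ)+1) from by ring)]
        push_cast
        ring
      rw [Finset.sum_congr rfl hterm, Finset.sum_add_distrib, hshift, ← Finset.mul_sum,
        qb_zero, ← hG]
      simp only [Nat.cast_zero, zero_mul, zpow_zero, pow_zero, mul_one, one_mul]
      ring
    have hcast : ∀ i : ℕ, ((i:ℤ) * (((l+1:ℕ):ℤ)-1)) = ((i:ℤ) * (((l:ℤ)+1)-1)) := by
      intro i; push_cast; ring
    calc ∑ i ∈ Finset.range (l+1+1), qb q (l+1) i * q ^ ((i:ℤ) * (((l+1:ℕ):ℤ)-1)) * x ^ i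
        = ∑ i ∈ Finset.range (l+1+1), qb q (l+1) i * q ^ ((i:ℤ) * (((l:ℤ)+1)-1)) * x ^ i := by
          refine Finset.sum_congr rfl fun i _ => ?_; rw [hcast]
      _ = (1+x) * ∏ j ∈ Finset.range l, (1 + q ^ (2*((j:ℤ)+1)) * x) := hmain
      _ = ∏ j ∈ Finset.range (l+1), (1 + q ^ (2*(j:ℤ)) * x) := by
          rw [Finset.prod_range_succ']
          have hc : ∀ j ∈ Finset.range l,
              (1 + q ^ (2*((j+1:ℕ):ℤ)) * x) = (1 + q ^ (2*((j:ℤ)+1)) * x) := by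
            intro j _
            norm_num
          rw [Finset.prod_congr rfl hc]
          norm_num
          ring

lemma prod_zpow (hq : q ≠ 0) (f : ℕ → ℤ) (n : ℕ) :
    ∏ j ∈ Finset.range n, q ^ (f j) = q ^ (∑ j ∈ Finset.range n, f j) := by
  induction n with
  | zero => simp
  | succ n ih => rw [Finset.prod_range_succ, Finset.sum_range_succ, ih, zpow_add₀ hq]

lemma qfact_split (hq : q ≠ 0) : ∀ l n : ℕ, l ≤ n →
    qfact q n = qfact q (n - l) * ∏ j ∈ Finset.range l, qint q ((n:ℤ) - (j:ℤ))
  | 0, n, _ => by simp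
  | l+1, n, h => by
    have hl : l ≤ n := by omega
    rw [qfact_split hq l n hl, Finset.prod_range_succ]
    have h1 : qfact q (n - l) = qfact q (n - (l+1)) * qint q ((n:ℤ) - l) := by
      have e : n - l = (n - (l+1)) + 1 := by omega
      rw [e, qfact_succ]
      congr 1
      rw [Nat.cast_sub h]
      push_cast
      ring
    rw [h1]; ring

/-- Expansion of one factor `[m-i-j]·(q-q⁻¹)`. -/
lemma qint_D (hq : q ≠ 0) (hD : q - q⁻¹ ≠ 0) (m i j : ℤ) :
    qint q (m - i - j) * (q - q⁻¹)
      = q ^ (m - i - j) * (1 + q ^ (2*j) * (-q ^ (2*i - 2*m))) := by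
  rw [qint, div_mul_cancel₀ _ hD]
  have h1 : q ^ (m-i-j) * (q ^ (2*j) * q ^ (2*i-2*m)) = q ^ (-(m-i-j)) := by
    rw [← zpow_add₀ hq, ← zpow_add₀ hq]
    congr 1
    ring
  linear_combination h1

/-- The per-(i,k) rearrangement. -/
lemma swap_term (hq : q ≠ 0) (B1 B2 : ℂ) (l m Sm : ℤ) (i k : ℕ) :
    (-1:ℂ)^i * q ^ (-(i:ℤ)) * B1
        * (q ^ (Sm - (i:ℤ)*l) * (B2 * q ^ ((k:ℤ)*(l-1)) * (-q ^ (2*(i:ℤ) - 2*m))^k))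
      = (B2 * q ^ ((k:ℤ)*(l-1)) * (-q ^ (-2*m))^k * q ^ Sm)
        * (B1 * q ^ ((i:ℤ)*(l-1)) * (-q ^ (2*(k:ℤ) - 2*l))^i) := by
  rw [neg_pow (q ^ (2*(i:ℤ) - 2*m)) k, neg_pow (q ^ (-2*m)) k, neg_pow (q ^ (2*(k:ℤ) - 2*l)) i,
    ← zpow_natCast (q ^ (2*(i:ℤ) - 2*m)) k, ← zpow_mul,
    ← zpow_natCast (q ^ (-2*m)) k, ← zpow_mul,
    ← zpow_natCast (q ^ (2*(k:ℤ) - 2*l)) i, ← zpow_mul]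
  have h1 : q ^ (-(i:ℤ)) * q ^ (Sm - (i:ℤ)*l) * q ^ ((2*(i:ℤ) - 2*m)*(k:ℤ))
      = q ^ Sm * q ^ ((-2*m)*(k:ℤ)) * q ^ ((i:ℤ)*(l-1)) * q ^ ((2*(k:ℤ) - 2*l)*(i:ℤ)) := by
    rw [← zpow_add₀ hq, ← zpow_add₀ hq, ← zpow_add₀ hq, ← zpow_add₀ hq, ← zpow_add₀ hq]
    congr 1
    ring
  linear_combination ((-1:ℂ)^i * (-1:ℂ)^k * B1 * B2 * q ^ ((k:ℤ)*(l-1))) * h1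

end QIdent

open QIdent

/-- Theorem 2.1: the `q`-identity
`∑_{i=0}^{min(l,m-l)} (-1)^i q^{-i} [m-i]_q!/([i]_q![l-i]_q![m-l-i]_q!) = q^{l(m-l)}`. -/
theorem qIdentity (q : ℂ) (hq : q ≠ 0) (hq' : NotRootOfUnity q)
    (m l : ℕ) (hm : 0 < m) (hl : 0 < l) (hml : l ≤ m) :
    (∑ i ∈ Finset.range (min l (m - l) + 1),
        (-1 : ℂ) ^ i * q ^ (-(i : ℤ)) * qfact q (m - i) /
          (qfact q i * qfact q (l - i) * qfact q (m - l - i)))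
      = q ^ ((l : ℤ) * ((m : ℤ) - (l : ℤ))) := by
  have hru : ∀ k : ℕ, 0 < k → q ^ k ≠ 1 := hq'
  have hD : q - q⁻¹ ≠ 0 := sub_inv_ne hq hru
  set S : ℂ := ∑ i ∈ Finset.range (min l (m - l) + 1),
      (-1 : ℂ) ^ i * q ^ (-(i : ℤ)) * qfact q (m - i) /
        (qfact q i * qfact q (l - i) * qfact q (m - l - i)) with hS
  set E : ℂ := ∑ i ∈ Finset.range (l + 1),
      (-1 : ℂ) ^ i * q ^ (-(i : ℤ)) * qb q l i
        * ∏ j ∈ Finset.range l, qint q ((m:ℤ) - (i:ℤ) - (j:ℤ)) with hE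
  set Sm : ℤ := ∑ j ∈ Finset.range l, ((m:ℤ) - (j:ℤ)) with hSm
  set Sc : ℤ := ∑ j ∈ Finset.range l, ((j:ℤ) + 1) with hSc
  set G0 : ℂ := ∏ j ∈ Finset.range l, (1 - q ^ (2*(j:ℤ) - 2*(l:ℤ))) with hG0
  -- Step 1 : S * [l]! = E
  have key1 : S * qfact q l = E := by
    rw [hS, hE, Finset.sum_mul]
    calc ∑ i ∈ Finset.range (min l (m - l) + 1),
          (-1 : ℂ) ^ i * q ^ (-(i : ℤ)) * qfact q (m - i) /
            (qfact q i * qfact q (l - i) * qfact q (m - l - i)) * qfact q l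
        = ∑ i ∈ Finset.range (min l (m - l) + 1),
            (-1 : ℂ) ^ i * q ^ (-(i : ℤ)) * qb q l i
              * ∏ j ∈ Finset.range l, qint q ((m:ℤ) - (i:ℤ) - (j:ℤ)) := by
          refine Finset.sum_congr rfl fun i hi => ?_
          have hi1 : i ≤ l := by have := Finset.mem_range.mp hi; omega
          have hi2 : i ≤ m - l := by have := Finset.mem_range.mp hi; omega
          have hsplit := qfact_split hq l (m - i) (by omega)
          have hc : ((m - i : ℕ) : ℤ) = (m:ℤ) - (i:ℤ) := by omega
          simp only [hc] at hsplit
          have e3 : m - l - i = m - i - l := by omega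
          rw [e3, hsplit, ← qb_mul_qfact hq l i hi1]
          have n1 := qfact_ne_zero hq hru i
          have n2 := qfact_ne_zero hq hru (l - i)
          have n3 := qfact_ne_zero hq hru (m - i - l)
          field_simp
      _ = ∑ i ∈ Finset.range (l + 1),
            (-1 : ℂ) ^ i * q ^ (-(i : ℤ)) * qb q l i
              * ∏ j ∈ Finset.range l, qint q ((m:ℤ) - (i:ℤ) - (j:ℤ)) := by
          refine Finset.sum_subset (Finset.range_subset_range.mpr (by omega)) ?_
          intro i hi hni
          have h1 : i ≤ l := by have := Finset.mem_range.mp hi; omega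
          have h2 : min l (m - l) < i := by
            by_contra hcon
            exact hni (Finset.mem_range.mpr (by omega))
          have h3 : m - i < l := by omega
          have h0 : qint q ((m:ℤ) - (i:ℤ) - ((m - i : ℕ):ℤ)) = 0 := by
            rw [show (m:ℤ) - (i:ℤ) - ((m - i : ℕ):ℤ) = 0 from by omega]
            simp [qint]
          rw [Finset.prod_eq_zero (Finset.mem_range.mpr h3) h0, mul_zero]
  -- Step 2 : E * (q - q⁻¹)^l = q^Sm * G0
  have key2 : E * (q - q⁻¹)^l = q ^ Sm * G0 := by
    have hsum_exp : ∀ i : ℕ, ∑ j ∈ Finset.range l, ((m:ℤ) - (i:ℤ) - (j:ℤ))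
        = Sm - (i:ℤ) * (l:ℤ) := by
      intro i
      calc (∑ j ∈ Finset.range l, ((m:ℤ) - (i:ℤ) - (j:ℤ)))
          = ∑ j ∈ Finset.range l, (((m:ℤ) - (j:ℤ)) - (i:ℤ)) :=
            Finset.sum_congr rfl (fun j _ => by ring)
        _ = Sm - (i:ℤ) * (l:ℤ) := by
            rw [Finset.sum_sub_distrib, Finset.sum_const, Finset.card_range, nsmul_eq_mul, ← hSm]
            ring
    have step_i : ∀ i ∈ Finset.range (l+1),
        ((-1 : ℂ) ^ i * q ^ (-(i : ℤ)) * qb q l i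
          * ∏ j ∈ Finset.range l, qint q ((m:ℤ) - (i:ℤ) - (j:ℤ))) * (q - q⁻¹)^l
        = ∑ k ∈ Finset.range (l+1),
            (-1 : ℂ) ^ i * q ^ (-(i : ℤ)) * qb q l i
              * (q ^ (Sm - (i:ℤ)*(l:ℤ))
                * (qb q l k * q ^ ((k:ℤ)*((l:ℤ)-1)) * (-q ^ (2*(i:ℤ) - 2*(m:ℤ)))^k)) := by
      intro i _
      have hprod : (∏ j ∈ Finset.range l, qint q ((m:ℤ) - (i:ℤ) - (j:ℤ))) * (q - q⁻¹)^l
          = q ^ (Sm - (i:ℤ)*(l:ℤ))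
            * ∑ k ∈ Finset.range (l+1),
                qb q l k * q ^ ((k:ℤ)*((l:ℤ)-1)) * (-q ^ (2*(i:ℤ) - 2*(m:ℤ)))^k := by
        calc (∏ j ∈ Finset.range l, qint q ((m:ℤ) - (i:ℤ) - (j:ℤ))) * (q - q⁻¹)^l
            = ∏ j ∈ Finset.range l, (qint q ((m:ℤ) - (i:ℤ) - (j:ℤ)) * (q - q⁻¹)) := by
              rw [Finset.prod_mul_distrib, Finset.prod_const, Finset.card_range]
          _ = ∏ j ∈ Finset.range l, (q ^ ((m:ℤ) - (i:ℤ) - (j:ℤ))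
                * (1 + q ^ (2*(j:ℤ)) * (-q ^ (2*(i:ℤ) - 2*(m:ℤ))))) :=
              Finset.prod_congr rfl (fun j _ => qint_D hq hD (m:ℤ) (i:ℤ) (j:ℤ))
          _ = (∏ j ∈ Finset.range l, q ^ ((m:ℤ) - (i:ℤ) - (j:ℤ)))
                * ∏ j ∈ Finset.range l, (1 + q ^ (2*(j:ℤ)) * (-q ^ (2*(i:ℤ) - 2*(m:ℤ)))) :=
              Finset.prod_mul_distrib
          _ = q ^ (Sm - (i:ℤ)*(l:ℤ))
                * ∑ k ∈ Finset.range (l+1),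
                    qb q l k * q ^ ((k:ℤ)*((l:ℤ)-1)) * (-q ^ (2*(i:ℤ) - 2*(m:ℤ)))^k := by
              rw [prod_zpow hq, hsum_exp i, qb_gauss hq l (-q ^ (2*(i:ℤ) - 2*(m:ℤ)))]
      calc ((-1 : ℂ) ^ i * q ^ (-(i : ℤ)) * qb q l i
            * ∏ j ∈ Finset.range l, qint q ((m:ℤ) - (i:ℤ) - (j:ℤ))) * (q - q⁻¹)^l
          = (-1 : ℂ) ^ i * q ^ (-(i : ℤ)) * qb q l i
            * ((∏ j ∈ Finset.range l, qint q ((m:ℤ) - (i:ℤ) - (j:ℤ))) * (q - q⁻¹)^l) := by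
            ring
        _ = (-1 : ℂ) ^ i * q ^ (-(i : ℤ)) * qb q l i
            * (q ^ (Sm - (i:ℤ)*(l:ℤ))
              * ∑ k ∈ Finset.range (l+1),
                  qb q l k * q ^ ((k:ℤ)*((l:ℤ)-1)) * (-q ^ (2*(i:ℤ) - 2*(m:ℤ)))^k) := by
            rw [hprod]
        _ = _ := by
            rw [Finset.mul_sum, Finset.mul_sum]
    calc E * (q - q⁻¹)^l
        = ∑ i ∈ Finset.range (l+1),
            ((-1 : ℂ) ^ i * q ^ (-(i : ℤ)) * qb q l i
              * ∏ j ∈ Finset.range l, qint q ((m:ℤ) - (i:ℤ) - (j:ℤ))) * (q - q⁻¹)^l := by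
          rw [hE, Finset.sum_mul]
      _ = ∑ i ∈ Finset.range (l+1), ∑ k ∈ Finset.range (l+1),
            (-1 : ℂ) ^ i * q ^ (-(i : ℤ)) * qb q l i
              * (q ^ (Sm - (i:ℤ)*(l:ℤ))
                * (qb q l k * q ^ ((k:ℤ)*((l:ℤ)-1)) * (-q ^ (2*(i:ℤ) - 2*(m:ℤ)))^k)) :=
          Finset.sum_congr rfl step_i
      _ = ∑ k ∈ Finset.range (l+1), ∑ i ∈ Finset.range (l+1),
            (-1 : ℂ) ^ i * q ^ (-(i : ℤ)) * qb q l i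
              * (q ^ (Sm - (i:ℤ)*(l:ℤ))
                * (qb q l k * q ^ ((k:ℤ)*((l:ℤ)-1)) * (-q ^ (2*(i:ℤ) - 2*(m:ℤ)))^k)) :=
          Finset.sum_comm
      _ = ∑ k ∈ Finset.range (l+1),
            (qb q l k * q ^ ((k:ℤ)*((l:ℤ)-1)) * (-q ^ (-2*(m:ℤ)))^k * q ^ Sm)
              * ∑ i ∈ Finset.range (l+1),
                  qb q l i * q ^ ((i:ℤ)*((l:ℤ)-1)) * (-q ^ (2*(k:ℤ) - 2*(l:ℤ)))^i := by
          refine Finset.sum_congr rfl fun k _ => ?_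
          rw [Finset.mul_sum]
          exact Finset.sum_congr rfl fun i _ => swap_term hq (qb q l i) (qb q l k) l m Sm i k
      _ = ∑ k ∈ Finset.range (l+1),
            (qb q l k * q ^ ((k:ℤ)*((l:ℤ)-1)) * (-q ^ (-2*(m:ℤ)))^k * q ^ Sm)
              * ∏ j ∈ Finset.range l, (1 + q ^ (2*(j:ℤ)) * (-q ^ (2*(k:ℤ) - 2*(l:ℤ)))) := by
          refine Finset.sum_congr rfl fun k _ => ?_
          rw [qb_gauss hq]
      _ = (qb q l 0 * q ^ (((0:ℕ):ℤ)*((l:ℤ)-1)) * (-q ^ (-2*(m:ℤ)))^(0:ℕ) * q ^ Sm)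
            * ∏ j ∈ Finset.range l, (1 + q ^ (2*(j:ℤ)) * (-q ^ (2*((0:ℕ):ℤ) - 2*(l:ℤ)))) := by
          refine Finset.sum_eq_single_of_mem 0 (Finset.mem_range.mpr (by omega)) ?_
          intro k hk hk0
          have hk1 : 1 ≤ k := by omega
          have hk2 : k ≤ l := by have := Finset.mem_range.mp hk; omega
          have hzero : (1 + q ^ (2*((l-k:ℕ):ℤ)) * (-q ^ (2*(k:ℤ) - 2*(l:ℤ)))) = 0 := by
            rw [mul_neg,
              zpow_merge hq (show 2*((l-k:ℕ):ℤ) + (2*(k:ℤ) - 2*(l:ℤ)) = 0 from by omega),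
              zpow_zero]
            ring
          rw [Finset.prod_eq_zero (Finset.mem_range.mpr (show l - k < l from by omega)) hzero,
            mul_zero]
      _ = q ^ Sm * G0 := by
          rw [hG0, qb_zero]
          have hW0 : ∀ j ∈ Finset.range l,
              (1 + q ^ (2*(j:ℤ)) * (-q ^ (2*((0:ℕ):ℤ) - 2*(l:ℤ))))
                = (1 - q ^ (2*(j:ℤ) - 2*(l:ℤ))) := by
            intro j _
            rw [mul_neg,
              zpow_merge hq (show 2*(j:ℤ) + (2*((0:ℕ):ℤ) - 2*(l:ℤ))
                = 2*(j:ℤ) - 2*(l:ℤ) from by push_cast; ring)]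
            ring
          rw [Finset.prod_congr rfl hW0]
          norm_num
  -- Step 3 : [l]! * (q - q⁻¹)^l = q^Sc * G0
  have key3 : qfact q l * (q - q⁻¹)^l = q ^ Sc * G0 := by
    calc qfact q l * (q - q⁻¹)^l
        = ∏ s ∈ Finset.range l, (qint q ((s:ℤ)+1) * (q - q⁻¹)) := by
          rw [qfact, show (q - q⁻¹)^l = ∏ _s ∈ Finset.range l, (q - q⁻¹) from by
                rw [Finset.prod_const, Finset.card_range],
            ← Finset.prod_mul_distrib]
      _ = ∏ s ∈ Finset.range l, (q ^ ((s:ℤ)+1) * (1 - q ^ (-2*(s:ℤ)-2))) := by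
          refine Finset.prod_congr rfl fun s _ => ?_
          rw [qint, div_mul_cancel₀ _ hD]
          have h1 : q ^ ((s:ℤ)+1) * q ^ (-2*(s:ℤ)-2) = q ^ (-((s:ℤ)+1)) :=
            zpow_merge hq (by ring)
          linear_combination h1
      _ = q ^ Sc * ∏ s ∈ Finset.range l, (1 - q ^ (-2*(s:ℤ)-2)) := by
          rw [Finset.prod_mul_distrib, prod_zpow hq, hSc]
      _ = q ^ Sc * G0 := by
          congr 1
          have hr := Finset.prod_range_reflect (fun j => 1 - q ^ (2*(j:ℤ) - 2*(l:ℤ))) l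
          rw [hG0, ← hr]
          refine Finset.prod_congr rfl fun s hs => ?_
          have hsl := Finset.mem_range.mp hs
          congr 2
          omega
  -- nonvanishing
  have hG0ne : G0 ≠ 0 := by
    rw [hG0, Finset.prod_ne_zero_iff]
    intro j hj hcon
    refine zpow_ne_one hq hru (n := 2*(j:ℤ) - 2*(l:ℤ))
      (show 2*(j:ℤ) - 2*(l:ℤ) ≠ 0 from by have := Finset.mem_range.mp hj; omega) ?_
    linear_combination -hcon
  -- combine
  have hcomb : S * q ^ Sc * G0 = q ^ Sm * G0 := by
    calc S * q ^ Sc * G0 = S * (q ^ Sc * G0) := by ring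
      _ = S * (qfact q l * (q - q⁻¹)^l) := by rw [key3]
      _ = (S * qfact q l) * (q - q⁻¹)^l := by ring
      _ = E * (q - q⁻¹)^l := by rw [key1]
      _ = q ^ Sm * G0 := key2
  have h5 : S * q ^ Sc = q ^ Sm := mul_right_cancel₀ hG0ne hcomb
  have hSmSc : Sm - Sc = (l:ℤ) * ((m:ℤ) - (l:ℤ)) := by
    have e1 : Sm - Sc = ∑ j ∈ Finset.range l, (((m:ℤ) - (j:ℤ)) - ((j:ℤ)+1)) := by
      rw [hSm, hSc]
      exact (Finset.sum_sub_distrib ..).symm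
    have e2 : (∑ j ∈ Finset.range l, (((m:ℤ) - (j:ℤ)) - ((j:ℤ)+1)))
        = ∑ j ∈ Finset.range l, (((m:ℤ) - 1) - 2*(j:ℤ)) :=
      Finset.sum_congr rfl (fun j _ => by ring)
    rw [e1, e2, Finset.sum_sub_distrib, Finset.sum_const, Finset.card_range, nsmul_eq_mul,
      ← Finset.mul_sum]
    have h7 : (∑ j ∈ Finset.range l, (j:ℤ)) * 2 = (l:ℤ) * ((l:ℤ)-1) := by
      have h8 := Finset.sum_range_id_mul_two l
      calc (∑ j ∈ Finset.range l, (j:ℤ)) * 2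
          = (((∑ j ∈ Finset.range l, j) * 2 : ℕ) : ℤ) := by push_cast; ring
        _ = ((l * (l-1) : ℕ) : ℤ) := by rw [h8]
        _ = (l:ℤ) * ((l:ℤ)-1) := by
            push_cast [Nat.cast_sub (show 1 ≤ l from hl)]
            ring
    linear_combination -h7
  have h9 : S = q ^ Sm / q ^ Sc := by
    rw [eq_div_iff (zpow_ne_zero _ hq)]
    exact h5
  rw [h9, ← zpow_sub₀ hq, hSmSc]
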